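/- arXiv:1102.2169 — 2 statements merged into one kernel-verified Lean document; each statement's English description precedes it below -/
import Mathlib

section
/- π₁ of the orientation-preserving diffeomorphism group of the torus T² = S¹ × S¹ is isomorphic to ℤ × ℤ, generated by the loops of rotations in each circle factor; in particular there exist nontrivial elements, so gluing F × D² into a 4-manifold along a torus fiber F can be done in essentially different ways (logarithmic transforms). -/
/-!
STATEMENT 10: `π₁` of the diffeomorphism group of the torus `T² = S¹ × S¹` is
`ℤ × ℤ`, generated by the loops of rotations in the two circle factors
(Earle–Eells: `Diff₊(T²)` deformation retracts onto the translations `T²`).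
We formalize: `π₁(T²) ≅ ℤ × ℤ`, and the translation action `T² → Diff(T²)`
induces an injection of `π₁(T²)` into `π₁(Diff(T²))`; in particular nontrivial
regluing loops (logarithmic transforms) exist.
-/

open CategoryTheory
open scoped FundamentalGroupoid Manifold

/-- The homomorphism induced by a continuous map on fundamental groups. -/
noncomputable def π₁map {X Y : TopCat} (f : X ⟶ Y) (x : X) :
    FundamentalGroup X x →* FundamentalGroup Y (f x) :=
  (πₘ f).mapEnd ⟨x⟩

/-- The torus. -/
abbrev Torus : Type := Circle × Circle

/-- The diffeomorphism group of the torus, topologized as a subspace of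
`C(T², T²)` with the compact-open topology. -/
def DiffTorus : Type :=
  {f : C(Torus, Torus) //
    ∃ e : Diffeomorph ((𝓡 1).prod (𝓡 1)) ((𝓡 1).prod (𝓡 1)) Torus Torus (⊤ : ℕ∞), ⇑e = ⇑f}

noncomputable instance : TopologicalSpace DiffTorus := instTopologicalSpaceSubtype

/-- Left translation of the torus by `t`, as a diffeomorphism. -/
noncomputable def torusTranslate (t : Torus) :
    Diffeomorph ((𝓡 1).prod (𝓡 1)) ((𝓡 1).prod (𝓡 1)) Torus Torus (⊤ : ℕ∞) where
  toEquiv := Equiv.mulLeft t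
  contMDiff_toFun := contMDiff_mul_left
  contMDiff_invFun := contMDiff_mul_left

/-- The translation action of the torus on itself, as a continuous map into its
diffeomorphism group. -/
noncomputable def transMap : C(Torus, DiffTorus) where
  toFun t := ⟨(ContinuousMap.mk (fun p : Torus × Torus => p.1 * p.2)
      continuous_mul).curry t, torusTranslate t, rfl⟩
  continuous_toFun := by
    exact Continuous.subtype_mk (ContinuousMap.continuous _) _


noncomputable section WindingTheory
open unitInterval Finset

private lemma circle_ratio_slit {u v : Circle} (h : dist u v < 1) :
    (((u / v : Circle)) : ℂ) ∈ Complex.slitPlane := by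
  refine Complex.mem_slitPlane_iff.mpr (Or.inl ?_)
  have habs : ‖((u / v : Circle) : ℂ) - 1‖ < 1 := by
    have e : ((u / v : Circle) : ℂ) - 1 = ((u : ℂ) - v) / v := by
      push_cast
      field_simp
    rw [e, norm_div, Circle.norm_coe, div_one]
    rw [← dist_eq_norm]
    exact h
  have h1 := Complex.abs_re_le_norm (((u / v : Circle) : ℂ) - 1)
  have h2 : |(((u / v : Circle) : ℂ) - 1).re| < 1 := lt_of_le_of_lt h1 habs
  have e2 : (((u / v : Circle) : ℂ)).re = 1 + ((((u / v : Circle) : ℂ)) - 1).re := by simp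
  rw [e2]
  rcases abs_lt.mp h2 with ⟨hl, _⟩
  linarith

private lemma continuous_argRatio {Z : Type*} [TopologicalSpace Z] (f g : C(Z, Circle))
    (h : ∀ z, dist (f z) (g z) < 1) :
    Continuous fun z => Complex.arg ((f z / g z : Circle) : ℂ) := by
  refine continuous_iff_continuousAt.mpr fun z => ?_
  have hc : Continuous fun z => ((f z / g z : Circle) : ℂ) :=
    continuous_subtype_val.comp (f.continuous.div' g.continuous)
  exact ContinuousAt.comp (g := Complex.arg) (f := fun z => ((f z / g z : Circle) : ℂ))
    (Complex.continuousAt_arg (circle_ratio_slit (h z))) hc.continuousAt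

private lemma circle_exp_sum (n : ℕ) (f : ℕ → ℝ) :
    Circle.exp (∑ k ∈ Finset.range n, f k) = ∏ k ∈ Finset.range n, Circle.exp (f k) := by
  induction n with
  | zero => simp
  | succ n ih => simp [Finset.sum_range_succ, Finset.prod_range_succ, Circle.exp_add, ih]

private lemma exists_circle_lift (γ : C(I, Circle)) :
    ∃ g : C(I, ℝ), (∀ t, Circle.exp (g t) = γ t) ∧ g 0 = Complex.arg (γ 0) := by
  obtain ⟨δ, hδ, hH⟩ := Metric.uniformContinuous_iff.mp
    (CompactSpace.uniformContinuous_of_continuous γ.continuous) 1 one_pos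
  obtain ⟨n, hn⟩ := exists_nat_gt (1 / δ)
  have hn0 : (0 : ℝ) < n := lt_trans (by positivity) hn
  set p : ℕ → I → I := fun k t =>
    ⟨min t.1 ((k : ℝ) / n), le_min t.2.1 (by positivity), min_le_of_left_le t.2.2⟩ with hp
  have hpc : ∀ k, Continuous fun t : I => p k t := fun k =>
    (continuous_subtype_val.min continuous_const).subtype_mk _
  have hclose : ∀ k (t : I), dist (γ (p (k + 1) t)) (γ (p k t)) < 1 := by
    intro k t
    apply hH
    rw [Subtype.dist_eq, Real.dist_eq]
    have h1 : |min t.1 (((k : ℝ) + 1) / n) - min t.1 ((k : ℝ) / n)|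
        ≤ |(((k : ℝ) + 1) / n) - ((k : ℝ) / n)| := by
      calc |min t.1 (((k : ℝ) + 1) / n) - min t.1 ((k : ℝ) / n)|
          ≤ max |t.1 - t.1| |(((k : ℝ) + 1) / n) - ((k : ℝ) / n)| :=
            abs_min_sub_min_le_max _ _ _ _
        _ = _ := by rw [sub_self, abs_zero]; exact max_eq_right (abs_nonneg _)
    have h2 : |(((k : ℝ) + 1) / n) - ((k : ℝ) / n)| = 1 / n := by
      rw [div_sub_div_same]
      rw [show (k : ℝ) + 1 - k = 1 by ring]
      rw [abs_of_pos (by positivity)]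
    have h3 : 1 / (n : ℝ) < δ := by
      rw [div_lt_iff₀ hn0, mul_comm]
      exact (div_lt_iff₀ hδ).mp hn
    show |min t.1 ((((k + 1 : ℕ) : ℝ)) / n) - min t.1 ((k : ℝ) / n)| < δ
    push_cast at h1 ⊢
    calc |min t.1 ((k + 1 : ℝ) / n) - min t.1 ((k : ℝ) / n)| ≤ _ := h1
      _ = 1 / n := h2
      _ < δ := h3
  set g : I → ℝ := fun t =>
    Complex.arg (γ 0) + ∑ k ∈ Finset.range n,
      Complex.arg ((γ (p (k + 1) t) / γ (p k t) : Circle) : ℂ) with hg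
  have gc : Continuous g := by
    refine continuous_const.add (continuous_finset_sum _ fun k _ => ?_)
    exact continuous_argRatio ⟨fun t => γ (p (k + 1) t), γ.continuous.comp (hpc _)⟩
      ⟨fun t => γ (p k t), γ.continuous.comp (hpc _)⟩ (hclose k)
  have hn0' : n ≠ 0 := by exact_mod_cast hn0.ne'
  refine ⟨⟨g, gc⟩, fun t => ?_, ?_⟩
  · have hpn : p n t = t := Subtype.ext (by
      simp only [hp]
      rw [div_self hn0.ne']
      exact min_eq_left t.2.2)
    have hp0 : p 0 t = 0 := Subtype.ext (by
      simp only [hp]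
      push_cast
      rw [zero_div]
      exact min_eq_right t.2.1)
    show Circle.exp (g t) = γ t
    rw [hg]
    simp only []
    rw [Circle.exp_add, circle_exp_sum, Circle.exp_arg]
    rw [Finset.prod_congr rfl fun k _ => Circle.exp_arg (γ (p (k + 1) t) / γ (p k t))]
    rw [Finset.prod_range_div (fun k => γ (p k t)) n, hpn, hp0]
    rw [mul_comm]
    simp
  · show g 0 = Complex.arg (γ 0)
    rw [hg]
    simp only []
    have : ∀ k, p k 0 = 0 := fun k => Subtype.ext (by
      simp only [hp]
      exact min_eq_left (by positivity))
    have hz : ∀ k ∈ Finset.range n,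
        Complex.arg ((γ (p (k + 1) 0) / γ (p k 0) : Circle) : ℂ) = 0 := by
      intro k _
      rw [this, this, div_self', Circle.coe_one, Complex.arg_one]
    rw [Finset.sum_congr rfl hz]
    simp


open unitInterval

private lemma lift_unique {γ : C(I, Circle)} {g₁ g₂ : C(I, ℝ)}
    (h₁ : ∀ t, Circle.exp (g₁ t) = γ t) (h₂ : ∀ t, Circle.exp (g₂ t) = γ t)
    (h0 : g₁ 0 = g₂ 0) : ∀ t, g₁ t = g₂ t := by
  have hd : ∀ t, ∃ m : ℤ, g₁ t - g₂ t = m * (2 * Real.pi) := by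
    intro t
    have he : Circle.exp (g₁ t - g₂ t) = 1 := by rw [Circle.exp_sub, h₁, h₂, div_self']
    exact Circle.exp_eq_one.mp he
  set h : I → ℝ := fun t => g₁ t - g₂ t with hh
  have hc : Continuous h := g₁.continuous.sub g₂.continuous
  have hπ := Real.pi_pos
  have pihit : ∀ s : I, h s ≠ Real.pi ∧ h s ≠ -Real.pi := by
    intro s
    obtain ⟨m', hm'⟩ := hd s
    constructor
    · intro he
      have hm2 : h s = (m' : ℝ) * (2 * Real.pi) := hm'
      rw [he] at hm2
      have h1 : (1 : ℝ) * Real.pi = ((m' : ℝ) * 2) * Real.pi := by linear_combination hm2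
      have h2 : (1 : ℝ) = (m' : ℝ) * 2 := mul_right_cancel₀ Real.pi_ne_zero h1
      have h3 : (1 : ℤ) = m' * 2 := by exact_mod_cast h2
      omega
    · intro he
      have hm2 : h s = (m' : ℝ) * (2 * Real.pi) := hm'
      rw [he] at hm2
      have h1 : (-1 : ℝ) * Real.pi = ((m' : ℝ) * 2) * Real.pi := by linear_combination hm2
      have h2 : (-1 : ℝ) = (m' : ℝ) * 2 := mul_right_cancel₀ Real.pi_ne_zero h1
      have h3 : (-1 : ℤ) = m' * 2 := by exact_mod_cast h2
      omega
  have h00 : h 0 = 0 := sub_eq_zero.mpr h0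
  intro t
  by_contra hne
  have hne' : h t ≠ 0 := sub_ne_zero.mpr hne
  obtain ⟨m, hm⟩ := hd t
  have hmt : h t = (m : ℝ) * (2 * Real.pi) := hm
  rcases lt_or_gt_of_ne hne' with hlt | hgt
  · -- h t < 0, so h t ≤ -2π
    have hmneg : (m : ℝ) < 0 := by
      by_contra hge
      push_neg at hge
      have : (0 : ℝ) ≤ (m : ℝ) * (2 * Real.pi) := by positivity
      rw [hmt] at hlt; linarith
    have hmI : m ≤ -1 := by
      have : m < 0 := by exact_mod_cast hmneg
      omega
    have hmle : (m : ℝ) ≤ -1 := by exact_mod_cast hmI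
    have hle : h t ≤ -(2 * Real.pi) := by
      rw [hmt]
      nlinarith
    have hmem : -Real.pi ∈ Set.Icc (h t) (h 0) := by
      rw [h00]
      constructor <;> linarith
    obtain ⟨s, hs⟩ := intermediate_value_univ t 0 hc hmem
    exact (pihit s).2 hs
  · have hmpos : (0 : ℝ) < (m : ℝ) := by
      by_contra hge
      push_neg at hge
      have : (m : ℝ) * (2 * Real.pi) ≤ 0 := by
        apply mul_nonpos_of_nonpos_of_nonneg hge
        positivity
      rw [hmt] at hgt; linarith
    have hmI : 1 ≤ m := by
      have : 0 < m := by exact_mod_cast hmpos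
      omega
    have hmle : (1 : ℝ) ≤ (m : ℝ) := by exact_mod_cast hmI
    have hle : 2 * Real.pi ≤ h t := by
      rw [hmt]
      nlinarith
    have hmem : Real.pi ∈ Set.Icc (h 0) (h t) := by
      rw [h00]
      constructor <;> linarith
    obtain ⟨s, hs⟩ := intermediate_value_univ 0 t hc hmem
    exact (pihit s).1 hs

private def IsLiftPair (γ : Path (1 : Circle) 1) (m : ℤ) : Prop :=
  ∃ g : C(I, ℝ), (∀ t, Circle.exp (g t) = γ t) ∧ g 0 = 0 ∧ g 1 = m * (2 * Real.pi)

private lemma exists_isLiftPair (γ : Path (1 : Circle) 1) : ∃ m, IsLiftPair γ m := by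
  obtain ⟨g, hg, hg0⟩ := exists_circle_lift γ.toContinuousMap
  have h0 : g 0 = 0 := by
    rw [hg0]
    show Complex.arg ((γ 0 : Circle) : ℂ) = 0
    rw [γ.source, Circle.coe_one, Complex.arg_one]
  have h1 : Circle.exp (g 1) = 1 := by
    rw [hg 1]
    exact γ.target
  obtain ⟨m, hm⟩ := Circle.exp_eq_one.mp h1
  exact ⟨m, g, hg, h0, hm⟩

noncomputable def winding (γ : Path (1 : Circle) 1) : ℤ := (exists_isLiftPair γ).choose

private lemma winding_spec (γ : Path (1 : Circle) 1) : IsLiftPair γ (winding γ) :=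
  (exists_isLiftPair γ).choose_spec

private lemma winding_eq {γ : Path (1 : Circle) 1} {m : ℤ} (h : IsLiftPair γ m) :
    winding γ = m := by
  obtain ⟨g, hg, h0, h1⟩ := winding_spec γ
  obtain ⟨g', hg', h0', h1'⟩ := h
  have he := lift_unique hg hg' (h0.trans h0'.symm) 1
  rw [h1, h1'] at he
  have h2π : (2 * Real.pi) ≠ 0 := by positivity
  exact_mod_cast mul_right_cancel₀ h2π he

private lemma winding_refl : winding (Path.refl (1 : Circle)) = 0 := by
  apply winding_eq
  refine ⟨ContinuousMap.const I 0, fun t => ?_, rfl, by simp⟩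
  simp [Path.refl_apply]

private lemma winding_trans (γ₁ γ₂ : Path (1 : Circle) 1) :
    winding (γ₁.trans γ₂) = winding γ₁ + winding γ₂ := by
  obtain ⟨g₁, hg₁, h01, h11⟩ := winding_spec γ₁
  obtain ⟨g₂, hg₂, h02, h12⟩ := winding_spec γ₂
  apply winding_eq
  set P₁ : Path (0 : ℝ) ((winding γ₁ : ℝ) * (2 * Real.pi)) := ⟨g₁, h01, h11⟩ with hP₁
  set P₂ : Path ((winding γ₁ : ℝ) * (2 * Real.pi))
      ((winding γ₁ : ℝ) * (2 * Real.pi) + (winding γ₂ : ℝ) * (2 * Real.pi)) :=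
    ⟨⟨fun t => (winding γ₁ : ℝ) * (2 * Real.pi) + g₂ t,
      continuous_const.add g₂.continuous⟩, by simp [h02], by simp [h12]⟩ with hP₂
  refine ⟨(P₁.trans P₂).toContinuousMap, fun t => ?_, ?_, ?_⟩
  · show Circle.exp ((P₁.trans P₂) t) = (γ₁.trans γ₂) t
    rw [Path.trans_apply, Path.trans_apply]
    split_ifs with h
    · exact hg₁ _
    · show Circle.exp ((winding γ₁ : ℝ) * (2 * Real.pi) + g₂ _) = _
      rw [Circle.exp_add, Circle.exp_int_mul_two_pi, one_mul]
      exact hg₂ _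
  · show (P₁.trans P₂) 0 = 0
    simp
  · show (P₁.trans P₂) 1 = ((winding γ₁ + winding γ₂ : ℤ) : ℝ) * (2 * Real.pi)
    rw [Path.target]
    push_cast
    ring

private lemma winding_eq_of_dist_lt {γ₀ γ₁ : Path (1 : Circle) 1}
    (h : ∀ t, dist (γ₀ t) (γ₁ t) < 1) : winding γ₁ = winding γ₀ := by
  obtain ⟨g, hg, h0, h1⟩ := winding_spec γ₀
  apply winding_eq
  have hdist : ∀ t : I, dist (γ₁.toContinuousMap t) (γ₀.toContinuousMap t) < 1 := fun t => by
    rw [dist_comm]; exact h t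
  refine ⟨⟨fun t => g t + Complex.arg ((γ₁ t / γ₀ t : Circle) : ℂ),
    g.continuous.add (continuous_argRatio γ₁.toContinuousMap γ₀.toContinuousMap hdist)⟩,
    fun t => ?_, ?_, ?_⟩
  · show Circle.exp (g t + Complex.arg ((γ₁ t / γ₀ t : Circle) : ℂ)) = γ₁ t
    rw [Circle.exp_add, hg, Circle.exp_arg, mul_comm]
    simp
  · show g 0 + Complex.arg ((γ₁ 0 / γ₀ 0 : Circle) : ℂ) = 0
    rw [γ₁.source, γ₀.source, div_self', Circle.coe_one, Complex.arg_one, h0, add_zero]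
  · show g 1 + Complex.arg ((γ₁ 1 / γ₀ 1 : Circle) : ℂ) = _
    rw [γ₁.target, γ₀.target, div_self', Circle.coe_one, Complex.arg_one, h1, add_zero]

private lemma winding_homotopic {γ₀ γ₁ : Path (1 : Circle) 1} (h : γ₀.Homotopic γ₁) :
    winding γ₀ = winding γ₁ := by
  obtain ⟨F⟩ := h
  have hw : IsLocallyConstant fun s : I => winding (F.eval s) := by
    rw [IsLocallyConstant.iff_exists_open]
    intro s
    refine ⟨ContinuousMap.curry F.toContinuousMap ⁻¹'
        Metric.ball (ContinuousMap.curry F.toContinuousMap s) 1,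
      Metric.isOpen_ball.preimage (ContinuousMap.curry F.toContinuousMap).continuous,
      by simp, fun s' hs' => ?_⟩
    apply winding_eq_of_dist_lt
    intro t
    have hlt : dist (ContinuousMap.curry F.toContinuousMap s')
        (ContinuousMap.curry F.toContinuousMap s) < 1 := hs'
    calc dist (F.eval s t) (F.eval s' t)
        = dist (ContinuousMap.curry F.toContinuousMap s t)
          (ContinuousMap.curry F.toContinuousMap s' t) := rfl
      _ ≤ dist (ContinuousMap.curry F.toContinuousMap s)
          (ContinuousMap.curry F.toContinuousMap s') := ContinuousMap.dist_apply_le_dist t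
      _ < 1 := by rw [dist_comm]; exact hlt
  have := hw.apply_eq_of_preconnectedSpace 0 1
  rw [Path.Homotopy.eval_zero, Path.Homotopy.eval_one] at this
  exact this


private noncomputable def windingT (γ : Path (1 : Torus) 1) : ℤ × ℤ :=
  (winding (γ.map continuous_fst), winding (γ.map continuous_snd))

private lemma windingT_homotopic {γ₀ γ₁ : Path (1 : Torus) 1} (h : γ₀.Homotopic γ₁) :
    windingT γ₀ = windingT γ₁ := by
  have h1 := Path.Homotopic.map h (⟨Prod.fst, continuous_fst⟩ : C(Torus, Circle))
  have h2 := Path.Homotopic.map h (⟨Prod.snd, continuous_snd⟩ : C(Torus, Circle))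
  have e1 : winding (γ₀.map continuous_fst) = winding (γ₁.map continuous_fst) :=
    winding_homotopic h1
  have e2 : winding (γ₀.map continuous_snd) = winding (γ₁.map continuous_snd) :=
    winding_homotopic h2
  simp [windingT, e1, e2]

private lemma windingT_trans (γ₁ γ₂ : Path (1 : Torus) 1) :
    windingT (γ₁.trans γ₂) = windingT γ₁ + windingT γ₂ := by
  have e1 : (γ₁.trans γ₂).map (f := Prod.fst) continuous_fst
      = (γ₁.map continuous_fst).trans (γ₂.map continuous_fst) := Path.map_trans γ₁ γ₂ _
  have e2 : (γ₁.trans γ₂).map (f := Prod.snd) continuous_snd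
      = (γ₁.map continuous_snd).trans (γ₂.map continuous_snd) := Path.map_trans γ₁ γ₂ _
  simp [windingT, e1, e2, winding_trans, Prod.ext_iff]

private lemma homotopic_refl_of_windingT {γ : Path (1 : Torus) 1} (h : windingT γ = 0) :
    γ.Homotopic (Path.refl 1) := by
  obtain ⟨g₁, hg₁, h01, h11⟩ := winding_spec (γ.map continuous_fst)
  obtain ⟨g₂, hg₂, h02, h12⟩ := winding_spec (γ.map continuous_snd)
  have hm1 : winding (γ.map continuous_fst) = 0 := congrArg Prod.fst h
  have hm2 : winding (γ.map continuous_snd) = 0 := congrArg Prod.snd h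
  rw [hm1] at h11
  rw [hm2] at h12
  simp only [Int.cast_zero, zero_mul] at h11 h12
  have hcont : Continuous fun q : I × I =>
      ((Circle.exp ((1 - (q.1 : ℝ)) * g₁ q.2), Circle.exp ((1 - (q.1 : ℝ)) * g₂ q.2)) : Torus) := by
    apply Continuous.prodMk
    · exact Circle.exp.continuous.comp ((continuous_const.sub
        (continuous_subtype_val.comp continuous_fst)).mul (g₁.continuous.comp continuous_snd))
    · exact Circle.exp.continuous.comp ((continuous_const.sub
        (continuous_subtype_val.comp continuous_fst)).mul (g₂.continuous.comp continuous_snd))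
  refine ⟨⟨⟨⟨fun q => (Circle.exp ((1 - (q.1 : ℝ)) * g₁ q.2), Circle.exp ((1 - (q.1 : ℝ)) * g₂ q.2)),
    hcont⟩, ?_, ?_⟩, ?_⟩⟩
  · intro t
    show (Circle.exp ((1 - ((0 : I) : ℝ)) * g₁ t), Circle.exp ((1 - ((0 : I) : ℝ)) * g₂ t)) = γ t
    rw [show ((0 : I) : ℝ) = 0 from rfl, sub_zero, one_mul, one_mul, hg₁ t, hg₂ t]
    rfl
  · intro t
    show (Circle.exp ((1 - ((1 : I) : ℝ)) * g₁ t), Circle.exp ((1 - ((1 : I) : ℝ)) * g₂ t))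
      = Path.refl (1 : Torus) t
    rw [show ((1 : I) : ℝ) = 1 from rfl, sub_self, zero_mul, zero_mul, Circle.exp_zero]
    rfl
  · intro s x hx
    rcases hx with hx | hx
    · subst hx
      show (Circle.exp ((1 - (s : ℝ)) * g₁ 0), Circle.exp ((1 - (s : ℝ)) * g₂ 0)) = γ 0
      rw [h01, h02, mul_zero, Circle.exp_zero, γ.source]
      rfl
    · rcases hx with rfl
      show (Circle.exp ((1 - (s : ℝ)) * g₁ 1), Circle.exp ((1 - (s : ℝ)) * g₂ 1)) = γ 1
      rw [h11, h12, mul_zero, Circle.exp_zero, γ.target]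
      rfl

private noncomputable def loopT (m k : ℤ) : Path (1 : Torus) 1 where
  toFun t := (Circle.exp ((m : ℝ) * (2 * Real.pi) * t), Circle.exp ((k : ℝ) * (2 * Real.pi) * t))
  continuous_toFun := by
    apply Continuous.prodMk <;>
      exact Circle.exp.continuous.comp (continuous_const.mul continuous_subtype_val)
  source' := by
    show (Circle.exp ((m : ℝ) * (2 * Real.pi) * ((0 : I) : ℝ)), _) = (1 : Torus)
    rw [show ((0 : I) : ℝ) = 0 from rfl, mul_zero, mul_zero, Circle.exp_zero]
    rfl
  target' := by
    show (Circle.exp ((m : ℝ) * (2 * Real.pi) * ((1 : I) : ℝ)), _) = (1 : Torus)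
    rw [show ((1 : I) : ℝ) = 1 from rfl, mul_one, mul_one,
      Circle.exp_int_mul_two_pi, Circle.exp_int_mul_two_pi]
    rfl

private lemma windingT_loopT (m k : ℤ) : windingT (loopT m k) = (m, k) := by
  have hA : winding ((loopT m k).map (f := Prod.fst) continuous_fst) = m := by
    apply winding_eq
    refine ⟨⟨fun t => (m : ℝ) * (2 * Real.pi) * t,
      (continuous_const.mul continuous_subtype_val)⟩, fun t => rfl, ?_, ?_⟩
    · show (m : ℝ) * (2 * Real.pi) * ((0 : I) : ℝ) = 0
      rw [show ((0 : I) : ℝ) = 0 from rfl, mul_zero]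
    · show (m : ℝ) * (2 * Real.pi) * ((1 : I) : ℝ) = (m : ℝ) * (2 * Real.pi)
      rw [show ((1 : I) : ℝ) = 1 from rfl, mul_one]
  have hB : winding ((loopT m k).map (f := Prod.snd) continuous_snd) = k := by
    apply winding_eq
    refine ⟨⟨fun t => (k : ℝ) * (2 * Real.pi) * t,
      (continuous_const.mul continuous_subtype_val)⟩, fun t => rfl, ?_, ?_⟩
    · show (k : ℝ) * (2 * Real.pi) * ((0 : I) : ℝ) = 0
      rw [show ((0 : I) : ℝ) = 0 from rfl, mul_zero]
    · show (k : ℝ) * (2 * Real.pi) * ((1 : I) : ℝ) = (k : ℝ) * (2 * Real.pi)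
      rw [show ((1 : I) : ℝ) = 1 from rfl, mul_one]
  simp [windingT, hA, hB]

attribute [local instance] Path.Homotopic.setoid

private noncomputable def windingQ : Path.Homotopic.Quotient (1 : Torus) 1 → ℤ × ℤ :=
  Quotient.lift windingT fun _ _ h => windingT_homotopic h

open CategoryTheory in
private noncomputable def torusPi1Hom : FundamentalGroup Torus 1 →* Multiplicative (ℤ × ℤ) :=
  MonoidHom.mk' (fun a => Multiplicative.ofAdd (windingQ a)) (by
    intro a b
    obtain ⟨p, hp⟩ := Quotient.exists_rep (a : Path.Homotopic.Quotient (1 : Torus) 1)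
    obtain ⟨q, hq⟩ := Quotient.exists_rep (b : Path.Homotopic.Quotient (1 : Torus) 1)
    show Multiplicative.ofAdd (windingQ (Path.Homotopic.Quotient.trans b a))
        = Multiplicative.ofAdd (windingQ a) * Multiplicative.ofAdd (windingQ b)
    rw [← hp, ← hq]
    show Multiplicative.ofAdd (windingT (q.trans p))
        = Multiplicative.ofAdd (windingT p) * Multiplicative.ofAdd (windingT q)
    rw [windingT_trans, add_comm, ofAdd_add])

open CategoryTheory in
private lemma torusPi1Hom_bij : Function.Bijective torusPi1Hom := by
  constructor
  · rw [injective_iff_map_eq_one]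
    intro a ha
    obtain ⟨p, hp⟩ := Quotient.exists_rep (a : Path.Homotopic.Quotient (1 : Torus) 1)
    have hw : windingT p = 0 := by
      have h0 : windingQ a = 0 := by
        have h1 := congrArg Multiplicative.toAdd ha
        simpa [torusPi1Hom] using h1
      rw [← hp] at h0
      exact h0
    have hhom := homotopic_refl_of_windingT hw
    have hid : a = 𝟙 (FundamentalGroupoid.mk (1 : Torus)) := by
      rw [← hp, FundamentalGroupoid.id_eq_path_refl]
      exact Quotient.sound hhom
    exact hid
  · intro x
    refine ⟨(⟦loopT x.toAdd.1 x.toAdd.2⟧ : Path.Homotopic.Quotient (1 : Torus) 1), ?_⟩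
    show Multiplicative.ofAdd
        (windingQ (⟦loopT x.toAdd.1 x.toAdd.2⟧ : Path.Homotopic.Quotient (1 : Torus) 1)) = x
    rw [show windingQ (⟦loopT x.toAdd.1 x.toAdd.2⟧ : Path.Homotopic.Quotient (1 : Torus) 1)
        = windingT (loopT x.toAdd.1 x.toAdd.2) from rfl]
    rw [windingT_loopT]
    simp

private noncomputable def torusPi1Equiv : FundamentalGroup Torus 1 ≃* Multiplicative (ℤ × ℤ) :=
  MulEquiv.ofBijective torusPi1Hom torusPi1Hom_bij

end WindingTheory


/-- Evaluation of a diffeomorphism at the identity element. -/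
noncomputable def evMap : C(DiffTorus, Torus) :=
  ⟨fun f => f.1 1, (ContinuousEvalConst.continuous_eval_const (1 : Torus)).comp
    continuous_subtype_val⟩

/-- `evMap` as a morphism in `TopCat`. -/
noncomputable def emHom : TopCat.of DiffTorus ⟶ TopCat.of Torus := TopCat.ofHom evMap

/-- `transMap` as a morphism in `TopCat`. -/
noncomputable def tmHom : TopCat.of Torus ⟶ TopCat.of DiffTorus := TopCat.ofHom transMap

theorem statement10 :
    Nonempty (FundamentalGroup Torus 1 ≃* Multiplicative (ℤ × ℤ)) ∧
    Function.Injective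
      (π₁map (X := TopCat.of Torus) (Y := TopCat.of DiffTorus) (TopCat.ofHom transMap) (1 : Torus)) := by
  constructor
  · exact ⟨torusPi1Equiv⟩
  · intro a b hab
    have hcomp : tmHom ≫ emHom = 𝟙 (TopCat.of Torus) := by
      apply TopCat.ext
      intro t
      show (transMap t).1 1 = t
      exact mul_one (M := Torus) t
    have hFG : πₘ tmHom ≫ πₘ emHom = 𝟭 (πₓ (TopCat.of Torus)) := by
      rw [← CategoryTheory.Functor.map_comp, hcomp, CategoryTheory.Functor.map_id]
      rfl
    have h2 : (πₘ tmHom ≫ πₘ emHom).mapEnd ⟨(1 : Torus)⟩ a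
        = (πₘ tmHom ≫ πₘ emHom).mapEnd ⟨(1 : Torus)⟩ b :=
      congrArg (π₁map emHom (transMap 1)) hab
    rw [hFG] at h2
    have hdone : ∀ c : FundamentalGroup Torus 1,
        (𝟭 (πₓ (TopCat.of Torus))).mapEnd ⟨(1 : Torus)⟩ c = c := fun c => rfl
    rwa [hdone a, hdone b] at h2
end

section
/- More generally, if p : X → Σ is a continuous surjection between path-connected, locally path-connected spaces such that every fiber p⁻¹(σ) is connected and p admits local sections (e.g., p is a proper submersion with connected fibers, or more simply a quotient map with connected fibers), then p_* : π₁(X) → π₁(Σ) is surjective. -/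
/-!
STATEMENT 14: If `p : X → Σ` is a quotient map between path-connected, locally
path-connected spaces, with `Σ` semilocally simply connected, and every fiber
`p⁻¹(σ)` is connected, then `p_* : π₁(X) → π₁(Σ)` is surjective.
-/

open CategoryTheory
open scoped FundamentalGroupoid

attribute [local instance] Path.Homotopic.setoid

/-- Semilocal simple connectivity: every point has a neighborhood in which all
loops at that point are null-homotopic in the ambient space. -/
def SemilocSimplyConnected (B : Type) [TopologicalSpace B] : Prop :=
  ∀ b : B, ∃ U ∈ nhds b, ∀ γ : Path b b, Set.range γ ⊆ U →
    FundamentalGroup.fromPath (X := TopCat.of B) ⟦γ⟧ = 1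

namespace Stmt14

variable {Y : Type} [TopologicalSpace Y]

/-- The arrow in the fundamental groupoid defined by a path. -/
def phom {a b : Y} (η : Path a b) :
    (⟨a⟩ : FundamentalGroupoid Y) ⟶ (⟨b⟩ : FundamentalGroupoid Y) := ⟦η⟧

lemma cast_rfl {a b : Y} (η : Path a b) : η.cast rfl rfl = η := by ext t; rfl

lemma hom_cast {a b a' b' : Y} (η : Path a b) (ha : a' = a) (hb : b' = b) :
    phom (η.cast ha hb) = eqToHom (by rw [ha]) ≫ phom η ≫ eqToHom (by rw [hb]) := by
  subst ha; subst hb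
  rw [cast_rfl]
  simp

lemma hom_trans {a b c : Y} (η : Path a b) (η' : Path b c) :
    phom (η.trans η') = phom η ≫ phom η' :=
  rfl

lemma hom_symm {a b : Y} (η : Path a b) :
    phom η.symm = Groupoid.inv (phom η) := rfl

lemma hom_refl (a : Y) : phom (Path.refl a) = 𝟙 (⟨a⟩ : FundamentalGroupoid Y) := rfl

lemma map_cast {X : Type} [TopologicalSpace X] (f : C(X, Y)) {a b a' b' : X}
    (η : Path a b) (ha : a' = a) (hb : b' = b) :
    (η.cast ha hb).map f.continuous
      = (η.map f.continuous).cast (by rw [ha]) (by rw [hb]) := by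
  subst ha; subst hb; ext t; rfl

lemma map_refl {X : Type} [TopologicalSpace X] (f : C(X, Y)) (a : X) :
    (Path.refl a).map f.continuous = Path.refl (f a) := by ext t; rfl

lemma loop_eq_id {U V : Set Y} {b : Y}
    (hVpc : IsPathConnected V) (hbV : b ∈ V) (hVU : V ⊆ U)
    (hU : ∀ γ : Path b b, Set.range γ ⊆ U →
      FundamentalGroup.fromPath (X := TopCat.of Y) ⟦γ⟧ = 1)
    {a : Y} (L : Path a a) (hL : Set.range L ⊆ V) :
    phom L = 𝟙 (⟨a⟩ : FundamentalGroupoid Y) := by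
  have haV : a ∈ V := hL ⟨0, L.source⟩
  obtain ⟨α, hα⟩ := hVpc.joinedIn b hbV a haV
  have hαr : Set.range α ⊆ V := by rintro _ ⟨t, rfl⟩; exact hα t
  set M : Path b b := α.trans (L.trans α.symm) with hM
  have hMU : Set.range M ⊆ U := by
    rw [hM, Path.trans_range, Path.trans_range, Path.symm_range]
    exact Set.union_subset (hαr.trans hVU)
      (Set.union_subset (hL.trans hVU) (hαr.trans hVU))
  have h1 : phom M = 𝟙 (⟨b⟩ : FundamentalGroupoid Y) := hU M hMU
  rw [hM, hom_trans, hom_trans, hom_symm, Groupoid.inv_eq_inv] at h1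
  have h2 : phom L
      = CategoryTheory.inv (phom α) ≫
        (phom α ≫ phom L ≫ CategoryTheory.inv (phom α)) ≫ phom α := by simp
  rw [h1] at h2
  simpa using h2

lemma paths_eq {U V : Set Y} {b : Y}
    (hVpc : IsPathConnected V) (hbV : b ∈ V) (hVU : V ⊆ U)
    (hU : ∀ γ : Path b b, Set.range γ ⊆ U →
      FundamentalGroup.fromPath (X := TopCat.of Y) ⟦γ⟧ = 1)
    {a a' : Y} (η η' : Path a a') (hη : Set.range η ⊆ V) (hη' : Set.range η' ⊆ V) :
    phom η = phom η' := by
  have hL : Set.range (η.trans η'.symm) ⊆ V := by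
    rw [Path.trans_range, Path.symm_range]
    exact Set.union_subset hη hη'
  have h1 := loop_eq_id hVpc hbV hVU hU (η.trans η'.symm) hL
  rw [hom_trans, hom_symm, Groupoid.inv_eq_inv] at h1
  have h2 : phom η = (phom η ≫ CategoryTheory.inv (phom η')) ≫ phom η' := by simp
  rw [h1] at h2
  simpa using h2

lemma joinedIn_preimage {X B : Type} [TopologicalSpace X] [TopologicalSpace B]
    [LocallyPathConnectedSpace X]
    (p : C(X, B)) (hq : Topology.IsQuotientMap p)
    (hfib : ∀ b : B, IsConnected (p ⁻¹' {b}))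
    {V : Set B} (hV : IsOpen V) (hVc : IsPreconnected V)
    {x y : X} (hx : p x ∈ V) (hy : p y ∈ V) :
    JoinedIn (p ⁻¹' V) x y := by
  set W : Set X := p ⁻¹' V with hWdef
  have hW : IsOpen W := hV.preimage p.continuous
  set C : Set X := pathComponentIn W x with hCdef
  have hC : IsOpen C := hW.pathComponentIn x
  set D : Set X := W \ C with hDdef
  have hD : IsOpen D := by
    rw [isOpen_iff_mem_nhds]
    intro z hz
    filter_upwards [(hW.pathComponentIn z).mem_nhds (mem_pathComponentIn_self hz.1)] with w hw
    refine ⟨pathComponentIn_subset hw, fun hwC => hz.2 ?_⟩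
    exact (hw.trans hwC.symm : JoinedIn W z x).symm
  have hdisj : Disjoint C D := disjoint_sdiff_self_right
  have hWCD : W ⊆ C ∪ D := fun z hz => (em (z ∈ C)).elim Or.inl fun h => Or.inr ⟨hz, h⟩
  have hfibW : ∀ z : X, p z ∈ V → p ⁻¹' {p z} ⊆ W := by
    intro z hzV w hw
    simp only [Set.mem_preimage, Set.mem_singleton_iff] at hw
    simpa [hWdef, Set.mem_preimage, hw] using hzV
  have hfibC : ∀ z ∈ C, p ⁻¹' {p z} ⊆ C := by
    intro z hz
    have hzW : z ∈ W := pathComponentIn_subset hz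
    exact IsPreconnected.subset_left_of_subset_union hC hD hdisj
      ((hfibW z hzW).trans hWCD) ⟨z, by simp, hz⟩ (hfib (p z)).isPreconnected
  have hfibD : ∀ z ∈ D, p ⁻¹' {p z} ⊆ D := by
    intro z hz
    exact IsPreconnected.subset_right_of_subset_union hC hD hdisj
      ((hfibW z hz.1).trans hWCD) ⟨z, by simp, hz⟩ (hfib (p z)).isPreconnected
  have hsatC : p ⁻¹' (p '' C) = C := by
    apply Set.Subset.antisymm
    · rintro z' hz'
      obtain ⟨z, hz, hpz⟩ := hz'
      exact hfibC z hz (by simp [hpz])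
    · exact Set.subset_preimage_image p C
  have hsatD : p ⁻¹' (p '' D) = D := by
    apply Set.Subset.antisymm
    · rintro z' hz'
      obtain ⟨z, hz, hpz⟩ := hz'
      exact hfibD z hz (by simp [hpz])
    · exact Set.subset_preimage_image p D
  have hpC : IsOpen (p '' C) := hq.isOpen_preimage.mp (by rw [hsatC]; exact hC)
  have hpD : IsOpen (p '' D) := hq.isOpen_preimage.mp (by rw [hsatD]; exact hD)
  have hVsub : V ⊆ p '' C ∪ p '' D := by
    intro b hb
    obtain ⟨z, hz⟩ := (hfib b).nonempty
    simp only [Set.mem_preimage, Set.mem_singleton_iff] at hz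
    have hzW : z ∈ W := by simp [hWdef, Set.mem_preimage, hz, hb]
    rcases hWCD hzW with h | h
    · exact Or.inl ⟨z, h, hz⟩
    · exact Or.inr ⟨z, h, hz⟩
  have hdisj2 : Disjoint (p '' C) (p '' D) := by
    rw [Set.disjoint_left]
    rintro b ⟨z, hz, hpz⟩ ⟨z', hz', hpz'⟩
    have : z' ∈ C := by
      rw [← hsatC]
      exact ⟨z, hz, by rw [hpz, hpz']⟩
    exact hz'.2 this
  have hVC : V ⊆ p '' C :=
    hVc.subset_left_of_subset_union hpC hpD hdisj2 hVsub
      ⟨p x, hx, x, mem_pathComponentIn_self hx, rfl⟩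
  have hyC : y ∈ C := by
    rw [← hsatC]
    exact hVC hy
  exact hyC

open unitInterval in
lemma truncateOfLE_apply {a b : Y} (γ : Path a b) {u v : ℝ} (h : u ≤ v) (t : I) :
    γ.truncateOfLE h t = γ.extend (min (max t u) v) := rfl

open unitInterval in
lemma truncateOfLE_range {a b : Y} (γ : Path a b) {u v : ℝ} (h : u ≤ v) :
    Set.range (γ.truncateOfLE h) ⊆ γ.extend '' Set.Icc u v := by
  rintro _ ⟨t, rfl⟩
  exact ⟨min (max t u) v, ⟨le_min (le_max_right _ _) h, min_le_right _ _⟩, rfl⟩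

lemma trunc_refl {a b : Y} (γ : Path a b) {u : ℝ} (h : u ≤ u) :
    γ.truncateOfLE h = Path.refl (γ.extend u) := by
  ext s
  show γ.extend (min (max s u) u) = γ.extend u
  rw [min_eq_right (le_max_right _ _)]

lemma trunc_full {a b : Y} (γ : Path a b) {v : ℝ} (h0 : (0:ℝ) ≤ v) (hv : (1:ℝ) ≤ v) :
    γ.truncateOfLE h0 = γ.cast γ.extend_zero (γ.extend_of_one_le hv) := by
  ext s
  show γ.extend (min (max s 0) v) = _
  rw [Path.cast_coe]
  rw [max_eq_left s.2.1, min_eq_left (s.2.2.trans hv), γ.extend_extends']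

open unitInterval in
lemma trunc_subdiv {a b : Y} (γ : Path a b) {u v w : ℝ} (h0 : 0 ≤ v) (h1 : v ≤ 1)
    (huv : u ≤ v) (hvw : v ≤ w) :
    (⟦γ.truncateOfLE (huv.trans hvw)⟧ : Path.Homotopic.Quotient (γ.extend u) (γ.extend w)) =
      ⟦(γ.truncateOfLE huv).trans (γ.truncateOfLE hvw)⟧ := by
  have hmem : ∀ s : I, min (2*(s:ℝ)) (max (2*(s:ℝ)-1) v) ∈ I := by
    intro s
    constructor
    · exact le_min (by have := s.2.1; linarith) (le_max_of_le_right h0)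
    · refine (min_le_right _ _).trans (max_le ?_ h1)
      have := s.2.2; linarith
  set f : I → I := fun s => ⟨min (2*(s:ℝ)) (max (2*(s:ℝ)-1) v), hmem s⟩ with hf
  have hfc : Continuous f := by
    apply Continuous.subtype_mk
    fun_prop
  have hf0 : f 0 = 0 := by
    rw [hf]
    ext
    show min (2*((0:I):ℝ)) (max (2*((0:I):ℝ)-1) v) = ((0:I):ℝ)
    norm_num
    exact h0
  have hf1 : f 1 = 1 := by
    rw [hf]
    ext
    show min (2*((1:I):ℝ)) (max (2*((1:I):ℝ)-1) v) = ((1:I):ℝ)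
    norm_num [max_eq_left h1]
  have key : (γ.truncateOfLE (huv.trans hvw)).reparam f hfc hf0 hf1
      = (γ.truncateOfLE huv).trans (γ.truncateOfLE hvw) := by
    ext s
    rw [Path.coe_reparam]
    simp only [Function.comp_apply]
    rw [truncateOfLE_apply, Path.trans_apply]
    split_ifs with h
    · rw [truncateOfLE_apply]
      show γ.extend (min (max (min (2*(s:ℝ)) (max (2*(s:ℝ)-1) v)) u) w)
          = γ.extend (min (max (2*(s:ℝ)) u) v)
      congr 1
      have hs1 : 2*(s:ℝ)-1 ≤ v := by have := s.2.1; linarith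
      rw [max_eq_right hs1]
      simp only [min_def, max_def]
      split_ifs <;> linarith
    · rw [truncateOfLE_apply]
      show γ.extend (min (max (min (2*(s:ℝ)) (max (2*(s:ℝ)-1) v)) u) w)
          = γ.extend (min (max (2*(s:ℝ)-1) v) w)
      congr 1
      push_neg at h
      have hs1 : max (2*(s:ℝ)-1) v ≤ 2*(s:ℝ) := max_le (by linarith) (by linarith)
      rw [min_eq_right hs1]
      simp only [min_def, max_def]
      split_ifs <;> linarith
  rw [← key]
  exact Quotient.sound ⟨Path.Homotopy.reparam _ f hfc hf0 hf1⟩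

lemma phom_trunc_degenerate {a b : Y} (γ : Path a b) {v : ℝ} (h0v : (0:ℝ) ≤ v) (hv : v = 0) :
    phom (γ.truncateOfLE h0v) = eqToHom (by rw [hv]) := by
  subst hv
  rw [trunc_refl, hom_refl]
  simp

end Stmt14


theorem statement14 {X B : Type} [TopologicalSpace X] [TopologicalSpace B]
    [PathConnectedSpace X] [LocallyPathConnectedSpace X]
    [PathConnectedSpace B] [LocallyPathConnectedSpace B]
    (p : C(X, B)) (hq : Topology.IsQuotientMap p)
    (hsemi : SemilocSimplyConnected B)
    (hfib : ∀ b : B, IsConnected (p ⁻¹' {b}))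
    (x₀ : X) :
    Function.Surjective (π₁map (X := TopCat.of X) (Y := TopCat.of B) (TopCat.ofHom p) x₀) := by
  classical
  intro g
  obtain ⟨γ, hγ⟩ := Quotient.exists_rep (FundamentalGroup.toPath g)
  -- γ : Path (p x₀) (p x₀)
  -- choose good neighborhoods
  have good : ∀ b : B, ∃ V : Set B, IsOpen V ∧ b ∈ V ∧ IsPathConnected V ∧
      ∀ {a a' : B} (η η' : Path a a'), Set.range η ⊆ V → Set.range η' ⊆ V →
        Stmt14.phom η = Stmt14.phom η' := by
    intro b
    obtain ⟨U, hU, hloop⟩ := hsemi b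
    obtain ⟨V, ⟨hVo, hbV, hVpc⟩, hVU⟩ := (isOpen_isPathConnected_basis b).mem_iff.mp hU
    exact ⟨V, hVo, hbV, hVpc, fun η η' h h' =>
      Stmt14.paths_eq hVpc hbV hVU hloop η η' h h'⟩
  choose V hVo hVmem hVpc hVgood using good
  -- Lebesgue number
  have hcover : (Set.univ : Set unitInterval) ⊆ ⋃ b : B, γ ⁻¹' (V b) :=
    fun t _ => Set.mem_iUnion.2 ⟨γ t, Set.mem_preimage.2 (hVmem (γ t))⟩
  obtain ⟨δ', hδ', hball⟩ := lebesgue_number_lemma_of_metric isCompact_univ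
    (fun b => (hVo b).preimage γ.continuous) hcover
  obtain ⟨n, hn⟩ := exists_nat_one_div_lt hδ'
  set N := n + 1 with hNdef
  have hNR : ((N:ℕ):ℝ) = (n:ℝ) + 1 := by push_cast [hNdef]; ring
  have hNpos : (0:ℝ) < (N:ℝ) := by rw [hNR]; positivity
  have hN0 : ((N:ℕ):ℝ) ≠ 0 := ne_of_gt hNpos
  have h1N : 1/((N:ℕ):ℝ) < δ' := by rw [hNR]; exact hn
  -- segments
  have hseg : ∀ k : ℕ, k < N → ∃ b : B,
      ∀ s : ℝ, s ∈ Set.Icc ((k:ℝ)/N) (((k:ℝ)+1)/N) → γ.extend s ∈ V b := by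
    intro k hk
    have hkN : (k:ℝ) < (N:ℝ) := by exact_mod_cast hk
    have hkI : (k:ℝ)/N ∈ Set.Icc (0:ℝ) 1 :=
      ⟨by positivity, by rw [div_le_one hNpos]; linarith⟩
    obtain ⟨b, hb⟩ := hball ⟨_, hkI⟩ (Set.mem_univ _)
    refine ⟨b, fun s hs => ?_⟩
    have hk1N : (k:ℝ) + 1 ≤ (N:ℝ) := by exact_mod_cast Nat.succ_le_of_lt hk
    have hsI : s ∈ Set.Icc (0:ℝ) 1 := by
      constructor
      · exact le_trans (by positivity) hs.1
      · refine hs.2.trans ?_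
        rw [div_le_one hNpos]; linarith
    have hdiv : ((k:ℝ)+1)/N = (k:ℝ)/N + 1/N := by ring
    have hmem : (⟨s, hsI⟩ : unitInterval) ∈ Metric.ball (⟨(k:ℝ)/N, hkI⟩ : unitInterval) δ' := by
      rw [Metric.mem_ball, Subtype.dist_eq, Real.dist_eq,
        abs_of_nonneg (by linarith [hs.1] : (0:ℝ) ≤ s - (k:ℝ)/N)]
      have := hs.2
      rw [hdiv] at this
      linarith
    have := hb hmem
    rwa [γ.extend_apply hsI]
  choose c hc using hseg
  -- lifted points
  have hfibne : ∀ b : B, (p ⁻¹' {b}).Nonempty := fun b => (hfib b).nonempty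
  set f : ℕ → X := fun k =>
    if k = 0 ∨ k = N then x₀ else (hfibne (γ.extend ((k:ℝ)/N))).some with hfdef
  have hpf : ∀ k, k ≤ N → p (f k) = γ.extend ((k:ℝ)/N) := by
    intro k hk
    by_cases h : k = 0 ∨ k = N
    · have hfk : f k = x₀ := by rw [hfdef]; simp [h]
      rw [hfk]
      rcases h with rfl | rfl
      · rw [Nat.cast_zero, zero_div, Path.extend_zero]
        rfl
      · rw [div_self hN0, Path.extend_one]
        rfl
    · have hfk : f k = (hfibne (γ.extend ((k:ℝ)/N))).some := by rw [hfdef]; simp [h]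
      rw [hfk]
      have := (hfibne (γ.extend ((k:ℝ)/N))).some_mem
      simpa using this
  have e0 : (⟨p x₀⟩ : FundamentalGroupoid B) = ⟨γ.extend 0⟩ := by rw [Path.extend_zero]; rfl
  have ek : ∀ k, k ≤ N →
      (⟨γ.extend ((k:ℝ)/N)⟩ : FundamentalGroupoid B) = ⟨p (f k)⟩ := by
    intro k hk; rw [hpf k hk]
  -- main induction
  have key : ∀ k, (hk : k ≤ N) → ∃ D : Path x₀ (f k),
      Stmt14.phom (D.map p.continuous) =
        eqToHom e0 ≫
          Stmt14.phom (γ.truncateOfLE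
            (div_nonneg (Nat.cast_nonneg k) (le_of_lt hNpos))) ≫
          eqToHom (ek k hk) := by
    intro k
    induction k with
    | zero =>
      intro hk
      have hf0 : f 0 = x₀ := by rw [hfdef]; simp
      refine ⟨(Path.refl x₀).cast rfl hf0.symm, ?_⟩
      rw [Stmt14.map_cast, Stmt14.hom_cast, Stmt14.map_refl, Stmt14.hom_refl]
      rw [Stmt14.phom_trunc_degenerate γ _ (by norm_num)]
      simp
    | succ k ih =>
      intro hk
      have hkN : k < N := Nat.lt_of_succ_le hk
      obtain ⟨D, hD⟩ := ih (Nat.le_of_lt hkN)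
      have hcast1 : ((k+1:ℕ):ℝ) = (k:ℝ) + 1 := by push_cast; ring
      have hkk1 : (k:ℝ)/N ≤ ((k+1:ℕ):ℝ)/N := by
        rw [hcast1]; gcongr; linarith
      have hIcc_lo : (k:ℝ)/N ∈ Set.Icc ((k:ℝ)/N) (((k:ℝ)+1)/N) :=
        ⟨le_refl _, by gcongr <;> linarith⟩
      have hIcc_hi : ((k+1:ℕ):ℝ)/N ∈ Set.Icc ((k:ℝ)/N) (((k:ℝ)+1)/N) := by
        rw [hcast1]
        exact ⟨by gcongr <;> linarith, le_refl _⟩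
      have hs_lo : p (f k) ∈ V (c k hkN) := by
        rw [hpf k (Nat.le_of_lt hkN)]
        exact hc k hkN _ hIcc_lo
      have hs_hi : p (f (k+1)) ∈ V (c k hkN) := by
        rw [hpf (k+1) hk]
        exact hc k hkN _ hIcc_hi
      obtain ⟨ε, hε⟩ := Stmt14.joinedIn_preimage p hq hfib (hVo _)
        (hVpc _).isConnected.isPreconnected hs_lo hs_hi
      refine ⟨D.trans ε, ?_⟩
      have hmt : (D.trans ε).map p.continuous
          = (D.map p.continuous).trans (ε.map p.continuous) := Path.map_trans D ε p.continuous
      rw [hmt, Stmt14.hom_trans, hD]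
      have hεr : Set.range (ε.map p.continuous) ⊆ V (c k hkN) := by
        rintro _ ⟨t, rfl⟩
        exact hε t
      have hSr : Set.range (γ.truncateOfLE hkk1) ⊆ V (c k hkN) := by
        refine (Stmt14.truncateOfLE_range γ hkk1).trans ?_
        rintro _ ⟨s, hs, rfl⟩
        rw [hcast1] at hs
        exact hc k hkN s hs
      have hScast : Set.range ((γ.truncateOfLE hkk1).cast
          (hpf k (Nat.le_of_lt hkN)) (hpf (k+1) hk)) ⊆ V (c k hkN) := by
        rw [Path.cast_coe] at *
        exact hSr
      have hseg2 : Stmt14.phom (ε.map p.continuous)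
          = Stmt14.phom ((γ.truncateOfLE hkk1).cast
              (hpf k (Nat.le_of_lt hkN)) (hpf (k+1) hk)) :=
        hVgood (c k hkN) _ _ hεr hScast
      rw [hseg2, Stmt14.hom_cast]
      have hmid : Stmt14.phom (γ.truncateOfLE
            (div_nonneg (Nat.cast_nonneg k) (le_of_lt hNpos)))
              ≫ Stmt14.phom (γ.truncateOfLE hkk1)
          = Stmt14.phom (γ.truncateOfLE
            (div_nonneg (Nat.cast_nonneg (k+1)) (le_of_lt hNpos))) := by
        rw [← Stmt14.hom_trans]
        exact (Stmt14.trunc_subdiv γ (by positivity)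
          (by rw [div_le_one hNpos]; exact_mod_cast Nat.le_of_lt hkN)
          (div_nonneg (Nat.cast_nonneg k) (le_of_lt hNpos)) hkk1).symm
      simp only [Category.assoc, eqToHom_trans, eqToHom_trans_assoc, eqToHom_refl,
        Category.id_comp]
      rw [← hmid]
      simp only [Category.assoc]
  -- conclusion
  obtain ⟨D, hD⟩ := key N le_rfl
  have hfN : f N = x₀ := by rw [hfdef]; simp
  set Dl : Path x₀ x₀ := D.cast rfl hfN.symm with hDl
  have hge1 : (1:ℝ) ≤ ((N:ℕ):ℝ)/N := le_of_eq (div_self hN0).symm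
  have hTN : Stmt14.phom (γ.truncateOfLE
        (div_nonneg (Nat.cast_nonneg N) (le_of_lt hNpos)))
      = eqToHom (by rw [γ.extend_zero]) ≫ Stmt14.phom γ
          ≫ eqToHom (by rw [γ.extend_of_one_le hge1]) := by
    rw [Stmt14.trunc_full γ _ hge1, Stmt14.hom_cast]
  have harrow : Stmt14.phom (Dl.map p.continuous) = Stmt14.phom γ := by
    rw [hDl, Stmt14.map_cast, Stmt14.hom_cast, hD, hTN]
    simp [eqToHom_trans, eqToHom_refl, Category.assoc]
  refine ⟨FundamentalGroup.fromPath ⟦Dl⟧, ?_⟩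
  have h1 : π₁map (X := TopCat.of X) (Y := TopCat.of B) (TopCat.ofHom p) x₀
      (FundamentalGroup.fromPath ⟦Dl⟧)
        = (⟦Dl.map p.continuous⟧ : Path.Homotopic.Quotient (p x₀) (p x₀)) := rfl
  exact h1.trans (harrow.trans hγ)
end
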